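/- Let P be a set of 2n points in regular wheel configuration, n ≥ 2, and suppose T_1, ..., T_n is a partition of the edge set of the complete geometric graph on P into plane spanning trees. Then every T_i contains at least one boundary edge. -/
import Mathlib

open scoped Real

namespace WheelCfg

/-- Vertex type of the wheel on `2n` points: `none` is the center,
`some i` is the `i`-th of the `2n-1` regularly spaced circle points. -/
abbrev WV (n : ℕ) := Option (Fin (2*n-1))

/-- Positions of the points of a regular wheel configuration with center `c`,
radius `R` and initial angle `θ`. -/
noncomputable def wpos (n : ℕ) (c : ℝ × ℝ) (R θ : ℝ) : WV n → ℝ × ℝ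
  | none => c
  | some i => (c.1 + R * Real.cos (θ + 2*π*i.val/(2*n-1)),
               c.2 + R * Real.sin (θ + 2*π*i.val/(2*n-1)))

/-- A radial edge: one endpoint is the center. -/
def Radial {n : ℕ} : WV n → WV n → Prop
  | none, _ => True
  | _, none => True
  | some _, some _ => False

/-- A boundary edge: joins two cyclically consecutive circle points. -/
def Boundary {n : ℕ} : WV n → WV n → Prop
  | some i, some j => (i.val + 1) % (2*n-1) = j.val ∨ (j.val + 1) % (2*n-1) = i.val
  | _, _ => False

/-- Non-crossing: distinct edges have disjoint open segments. -/
def NonCrossing {n : ℕ} (pos : WV n → ℝ × ℝ) (T : SimpleGraph (WV n)) : Prop :=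
  ∀ a b c d : WV n, T.Adj a b → T.Adj c d → s(a,b) ≠ s(c,d) →
    Disjoint (openSegment ℝ (pos a) (pos b)) (openSegment ℝ (pos c) (pos d))

/-- A plane spanning tree of the wheel configuration. -/
def PlaneSpanningTree {n : ℕ} (pos : WV n → ℝ × ℝ) (T : SimpleGraph (WV n)) : Prop :=
  T.IsTree ∧ NonCrossing pos T

/-- A partition of the edge set of the complete geometric graph into `n` graphs. -/
def IsPartition {n : ℕ} (T : Fin n → SimpleGraph (WV n)) : Prop :=
  ∀ a b : WV n, a ≠ b → ∃! i : Fin n, (T i).Adj a b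

/-- The cyclic successor of a circle point. -/
def nxt {m : ℕ} (k : Fin m) : Fin m := ⟨(k.val + 1) % m, Nat.mod_lt _ k.pos⟩

/-- The number of boundary edges of `T`. -/
noncomputable def boundaryCount {n : ℕ} (T : SimpleGraph (WV n)) : ℕ :=
  Set.ncard {k : Fin (2*n-1) | T.Adj (some k) (some (nxt k))}

/-- The number of radial edges of `T`. -/
noncomputable def radialCount {n : ℕ} (T : SimpleGraph (WV n)) : ℕ :=
  Set.ncard {k : Fin (2*n-1) | T.Adj none (some k)}

/-- The circle point with index `k` (mod `2n-1`). -/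
def cir (n : ℕ) (h : 0 < 2*n-1) (k : ℕ) : WV n := some ⟨k % (2*n-1), Nat.mod_lt _ h⟩

/-- Signed side of point `p` with respect to the oriented line through `u`, `v`. -/
def sideVal (u v p : ℝ × ℝ) : ℝ :=
  (v.1 - u.1) * (p.2 - u.2) - (v.2 - u.2) * (p.1 - u.1)

noncomputable def pt (c : ℝ × ℝ) (R α : ℝ) : ℝ × ℝ :=
  (c.1 + R * Real.cos α, c.2 + R * Real.sin α)

lemma param_unit {a b : ℝ} (h : a * b < 0) : 0 < a / (a - b) ∧ a / (a - b) < 1 := by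
  rcases lt_trichotomy a 0 with ha | ha | ha
  · have hb : 0 < b := by nlinarith
    have hd : a - b < 0 := by linarith
    exact ⟨div_pos_of_neg_of_neg ha hd, by rw [div_lt_one_of_neg hd]; linarith⟩
  · exfalso; rw [ha] at h; simp at h
  · have hb : b < 0 := by nlinarith
    have hd : 0 < a - b := by linarith
    exact ⟨div_pos ha hd, by rw [div_lt_one hd]; linarith⟩

/-- Two segments with strictly opposite orientations cross. -/
lemma not_disjoint_of_sideVal (u v p q : ℝ × ℝ)
    (hf : sideVal u v p * sideVal u v q < 0)
    (hg : sideVal p q u * sideVal p q v < 0) :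
    ¬ Disjoint (openSegment ℝ u v) (openSegment ℝ p q) := by
  obtain ⟨ht0, ht1⟩ := param_unit hf
  obtain ⟨hs0, hs1⟩ := param_unit hg
  set f0 := sideVal u v p
  set f1 := sideVal u v q
  set g0 := sideVal p q u
  set g1 := sideVal p q v
  have hfne : f0 - f1 ≠ 0 := by intro h0; rw [h0] at ht0; simp at ht0
  have hgne : g0 - g1 ≠ 0 := by intro h0; rw [h0] at hs0; simp at hs0
  set t := f0 / (f0 - f1) with ht
  set s := g0 / (g0 - g1) with hs
  set x : ℝ × ℝ := (1 - t) • p + t • q with hx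
  have hxy : x = (1 - s) • u + s • v := by
    apply Prod.ext
    · show (1-t)*p.1 + t*q.1 = (1-s)*u.1 + s*v.1
      rw [ht, hs]; field_simp
      simp only [f0, f1, g0, g1, sideVal]; ring
    · show (1-t)*p.2 + t*q.2 = (1-s)*u.2 + s*v.2
      rw [ht, hs]; field_simp
      simp only [f0, f1, g0, g1, sideVal]; ring
  rw [Set.not_disjoint_iff]
  refine ⟨x, ?_, ?_⟩
  · rw [hxy]; exact ⟨1 - s, s, by linarith, hs0, by ring, rfl⟩
  · exact ⟨1 - t, t, by linarith, ht0, by ring, rfl⟩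

lemma tripleS (x y : ℝ) :
    Real.sin (y - x) + Real.sin x - Real.sin y
      = 4 * Real.sin ((y - x)/2) * Real.sin (y/2) * Real.sin (x/2) := by
  have hx : x = 2 * (x/2) := by ring
  have hy : y = 2 * (y/2) := by ring
  have hyx : y - x = 2 * ((y-x)/2) := by ring
  have e1 : Real.sin x = 2 * Real.sin (x/2) * Real.cos (x/2) := by
    nth_rewrite 1 [hx]; rw [Real.sin_two_mul]
  have e2 : Real.sin y = 2 * Real.sin (y/2) * Real.cos (y/2) := by
    nth_rewrite 1 [hy]; rw [Real.sin_two_mul]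
  have e3 : Real.sin (y - x) = 2 * Real.sin ((y-x)/2) * Real.cos ((y-x)/2) := by
    nth_rewrite 1 [hyx]; rw [Real.sin_two_mul]
  have e4 : Real.sin ((y-x)/2)
      = Real.sin (y/2) * Real.cos (x/2) - Real.cos (y/2) * Real.sin (x/2) := by
    have h : (y-x)/2 = y/2 - x/2 := by ring
    rw [h, Real.sin_sub]
  have e5 : Real.cos ((y-x)/2)
      = Real.cos (y/2) * Real.cos (x/2) + Real.sin (y/2) * Real.sin (x/2) := by
    have h : (y-x)/2 = y/2 - x/2 := by ring
    rw [h, Real.cos_sub]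
  have p1 := Real.sin_sq_add_cos_sq (x/2)
  have p2 := Real.sin_sq_add_cos_sq (y/2)
  rw [e1, e2, e3, e4, e5]
  linear_combination (2 * Real.sin (y/2) * Real.cos (y/2)) * p1
    - (2 * Real.sin (x/2) * Real.cos (x/2)) * p2

lemma sideVal_pt (c : ℝ × ℝ) (R α β γ : ℝ) :
    sideVal (pt c R α) (pt c R β) (pt c R γ)
      = 4 * R^2 * Real.sin ((β-α)/2) * Real.sin ((γ-α)/2) * Real.sin ((γ-β)/2) := by
  have key : Real.sin (γ - β) + Real.sin (β - α) - Real.sin (γ - α)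
      = 4 * Real.sin ((γ-β)/2) * Real.sin ((γ-α)/2) * Real.sin ((β-α)/2) := by
    have h0 := tripleS (β - α) (γ - α)
    have h : γ - α - (β - α) = γ - β := by ring
    rw [h] at h0
    exact h0
  have expand : sideVal (pt c R α) (pt c R β) (pt c R γ)
      = R^2 * (Real.sin (γ - β) + Real.sin (β - α) - Real.sin (γ - α)) := by
    simp only [sideVal, pt, Real.sin_sub, Real.cos_sub]
    ring
  rw [expand, key]; ring

lemma sideVal_pt_center (c : ℝ × ℝ) (R α β : ℝ) :
    sideVal (pt c R α) (pt c R β) c = R^2 * Real.sin (β - α) := by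
  simp only [sideVal, pt, Real.sin_sub]; ring

lemma sideVal_center_pt (c : ℝ × ℝ) (R α γ : ℝ) :
    sideVal (pt c R α) c (pt c R γ) = -(R^2 * Real.sin (γ - α)) := by
  simp only [sideVal, pt, Real.sin_sub]; ring

lemma sin_frac_pos {M : ℝ} (x : ℝ) (h1 : 0 < x) (h2 : x < M) : 0 < Real.sin (π * x / M) := by
  have hM : (0:ℝ) < M := lt_trans h1 h2
  apply Real.sin_pos_of_pos_of_lt_pi
  · positivity
  · rw [div_lt_iff₀ hM]
    nlinarith [Real.pi_pos]

lemma wpos_cir_eq (n : ℕ) (hn : 1 ≤ n) (h : 0 < 2*n-1) (c : ℝ × ℝ) (R θ : ℝ) (k : ℕ) :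
    wpos n c R θ (cir n h k) = pt c R (θ + 2*π*k/(2*(n:ℝ)-1)) := by
  have hM0 : (0:ℝ) < 2*(n:ℝ)-1 := by
    have : (1:ℝ) ≤ (n:ℝ) := by exact_mod_cast hn
    linarith
  have hMnat : ((2*n-1 : ℕ) : ℝ) = 2*(n:ℝ)-1 := by
    rw [Nat.cast_sub (by omega : 1 ≤ 2*n)]; push_cast; ring
  have key : θ + 2*π*(k:ℝ)/(2*(n:ℝ)-1)
      = (θ + 2*π*((k % (2*n-1) : ℕ) : ℝ)/(2*(n:ℝ)-1)) + (k/(2*n-1) : ℕ)*(2*π) := by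
    have hk : ((2*n-1) * (k/(2*n-1)) + k % (2*n-1) : ℕ) = k := Nat.div_add_mod k (2*n-1)
    have hk' : ((2*n-1 : ℕ):ℝ) * ((k/(2*n-1) : ℕ):ℝ) + ((k % (2*n-1) : ℕ):ℝ) = (k:ℝ) := by
      exact_mod_cast congrArg (Nat.cast : ℕ → ℝ) hk
    rw [hMnat] at hk'
    field_simp
    linear_combination (-(2*π)) * hk'
  show wpos n c R θ (some ⟨k % (2*n-1), Nat.mod_lt _ h⟩) = _
  simp only [wpos, pt]
  rw [key, Real.cos_add_nat_mul_two_pi, Real.sin_add_nat_mul_two_pi]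


section Cross
variable {n : ℕ} {c : ℝ × ℝ} {R θ : ℝ}

lemma cast_facts {n d : ℕ} (hn : 2 ≤ n) (hd2 : 2 ≤ d) (hdn : d ≤ n-1) :
    (2:ℝ) ≤ (n:ℝ) ∧ (2:ℝ) ≤ (d:ℝ) ∧ (d:ℝ) + 1 ≤ (n:ℝ) := by
  have h1 : (2:ℝ) ≤ (n:ℝ) := by exact_mod_cast hn
  have h2 : (2:ℝ) ≤ (d:ℝ) := by exact_mod_cast hd2
  have h3 : d + 1 ≤ n := by omega
  have h4 : (d:ℝ) + 1 ≤ (n:ℝ) := by exact_mod_cast h3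
  exact ⟨h1, h2, h4⟩

set_option maxHeartbeats 1000000 in
/-- The chord from `k` to `k+d` crosses the radial segment at `k+1`. -/
lemma crossA (hn : 2 ≤ n) (hR : 0 < R) (k d : ℕ) (hd2 : 2 ≤ d) (hdn : d ≤ n-1) :
    ¬ Disjoint
      (openSegment ℝ (pt c R (θ + 2*π*(k:ℝ)/(2*(n:ℝ)-1)))
        (pt c R (θ + 2*π*((k+d : ℕ):ℝ)/(2*(n:ℝ)-1))))
      (openSegment ℝ (pt c R (θ + 2*π*((k+1 : ℕ):ℝ)/(2*(n:ℝ)-1))) c) := by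
  obtain ⟨hn', hd2', hdn'⟩ := cast_facts hn hd2 hdn
  set M : ℝ := 2*(n:ℝ)-1 with hM
  have hM3 : (3:ℝ) ≤ M := by rw [hM]; linarith
  set A := pt c R (θ + 2*π*(k:ℝ)/M)
  set B := pt c R (θ + 2*π*((k+d : ℕ):ℝ)/M)
  set P := pt c R (θ + 2*π*((k+1 : ℕ):ℝ)/M)
  apply not_disjoint_of_sideVal
  · -- sideVal A B P * sideVal A B c < 0
    have e1 : ((θ + 2*π*((k+d:ℕ):ℝ)/M) - (θ + 2*π*(k:ℝ)/M))/2 = π*(d:ℝ)/M := by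
      push_cast; ring
    have e2 : ((θ + 2*π*((k+1:ℕ):ℝ)/M) - (θ + 2*π*(k:ℝ)/M))/2 = π*(1:ℝ)/M := by
      push_cast; ring
    have e3 : ((θ + 2*π*((k+1:ℕ):ℝ)/M) - (θ + 2*π*((k+d:ℕ):ℝ)/M))/2
        = -(π*((d:ℝ)-1)/M) := by push_cast; ring
    have h1 : sideVal A B P
        = -(4*R^2 * Real.sin (π*(d:ℝ)/M) * Real.sin (π*(1:ℝ)/M)
            * Real.sin (π*((d:ℝ)-1)/M)) := by
      rw [sideVal_pt, e1, e2, e3, Real.sin_neg]; ring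
    have e4 : ((θ + 2*π*((k+d:ℕ):ℝ)/M) - (θ + 2*π*(k:ℝ)/M)) = π*(2*(d:ℝ))/M := by
      push_cast; ring
    have h2 : sideVal A B c = R^2 * Real.sin (π*(2*(d:ℝ))/M) := by
      rw [sideVal_pt_center, e4]
    have P1 : 0 < Real.sin (π*(d:ℝ)/M) := sin_frac_pos _ (by linarith) (by rw [hM]; linarith)
    have P2 : 0 < Real.sin (π*(1:ℝ)/M) := sin_frac_pos _ (by linarith) (by linarith)
    have P3 : 0 < Real.sin (π*((d:ℝ)-1)/M) :=
      sin_frac_pos _ (by linarith) (by rw [hM]; linarith)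
    have P4 : 0 < Real.sin (π*(2*(d:ℝ))/M) :=
      sin_frac_pos _ (by linarith) (by rw [hM]; linarith)
    rw [h1, h2]
    have hq : (0:ℝ) < 4*R^2 := by positivity
    nlinarith [mul_pos (mul_pos (mul_pos hq P1) P2) P3, mul_pos (mul_pos hR hR) P4]
  · -- sideVal P c A * sideVal P c B < 0
    have e5 : ((θ + 2*π*(k:ℝ)/M) - (θ + 2*π*((k+1:ℕ):ℝ)/M)) = -(π*(2:ℝ)/M) := by
      push_cast; ring
    have e6 : ((θ + 2*π*((k+d:ℕ):ℝ)/M) - (θ + 2*π*((k+1:ℕ):ℝ)/M))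
        = π*(2*((d:ℝ)-1))/M := by push_cast; ring
    have h3 : sideVal P c A = R^2 * Real.sin (π*(2:ℝ)/M) := by
      rw [sideVal_center_pt, e5, Real.sin_neg]; ring
    have h4 : sideVal P c B = -(R^2 * Real.sin (π*(2*((d:ℝ)-1))/M)) := by
      rw [sideVal_center_pt, e6]
    have P5 : 0 < Real.sin (π*(2:ℝ)/M) := sin_frac_pos _ (by linarith) (by linarith)
    have P6 : 0 < Real.sin (π*(2*((d:ℝ)-1))/M) :=
      sin_frac_pos _ (by linarith) (by rw [hM]; linarith)
    rw [h3, h4]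
    nlinarith [mul_pos (mul_pos hR hR) P5, mul_pos (mul_pos hR hR) P6]

set_option maxHeartbeats 1000000 in
/-- The chord from `k` to `k+d` crosses the chord from `k+1` to `k+t`, `d < t < 2n-1`. -/
lemma crossB (hn : 2 ≤ n) (hR : 0 < R) (k d t : ℕ) (hd2 : 2 ≤ d) (hdn : d ≤ n-1)
    (htl : d + 1 ≤ t) (htu : t < 2*n-1) :
    ¬ Disjoint
      (openSegment ℝ (pt c R (θ + 2*π*(k:ℝ)/(2*(n:ℝ)-1)))
        (pt c R (θ + 2*π*((k+d : ℕ):ℝ)/(2*(n:ℝ)-1))))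
      (openSegment ℝ (pt c R (θ + 2*π*((k+1 : ℕ):ℝ)/(2*(n:ℝ)-1)))
        (pt c R (θ + 2*π*((k+t : ℕ):ℝ)/(2*(n:ℝ)-1)))) := by
  obtain ⟨hn', hd2', hdn'⟩ := cast_facts hn hd2 hdn
  have htl' : (d:ℝ) + 1 ≤ (t:ℝ) := by exact_mod_cast htl
  have htu' : (t:ℝ) < 2*(n:ℝ)-1 := by
    have h0 : t + 1 ≤ 2*n-1 := htu
    have h1 : t + 2 ≤ 2*n := by omega
    have : (t:ℝ) + 2 ≤ 2*(n:ℝ) := by exact_mod_cast h1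
    linarith
  set M : ℝ := 2*(n:ℝ)-1 with hM
  have hM3 : (3:ℝ) ≤ M := by rw [hM]; linarith
  set A := pt c R (θ + 2*π*(k:ℝ)/M)
  set B := pt c R (θ + 2*π*((k+d : ℕ):ℝ)/M)
  set P := pt c R (θ + 2*π*((k+1 : ℕ):ℝ)/M)
  set Q := pt c R (θ + 2*π*((k+t : ℕ):ℝ)/M)
  apply not_disjoint_of_sideVal
  · have e1 : ((θ + 2*π*((k+d:ℕ):ℝ)/M) - (θ + 2*π*(k:ℝ)/M))/2 = π*(d:ℝ)/M := by
      push_cast; ring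
    have e2 : ((θ + 2*π*((k+1:ℕ):ℝ)/M) - (θ + 2*π*(k:ℝ)/M))/2 = π*(1:ℝ)/M := by
      push_cast; ring
    have e3 : ((θ + 2*π*((k+1:ℕ):ℝ)/M) - (θ + 2*π*((k+d:ℕ):ℝ)/M))/2
        = -(π*((d:ℝ)-1)/M) := by push_cast; ring
    have e4 : ((θ + 2*π*((k+t:ℕ):ℝ)/M) - (θ + 2*π*(k:ℝ)/M))/2 = π*(t:ℝ)/M := by
      push_cast; ring
    have e5 : ((θ + 2*π*((k+t:ℕ):ℝ)/M) - (θ + 2*π*((k+d:ℕ):ℝ)/M))/2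
        = π*((t:ℝ)-(d:ℝ))/M := by push_cast; ring
    have h1 : sideVal A B P
        = -(4*R^2 * Real.sin (π*(d:ℝ)/M) * Real.sin (π*(1:ℝ)/M)
            * Real.sin (π*((d:ℝ)-1)/M)) := by
      rw [sideVal_pt, e1, e2, e3, Real.sin_neg]; ring
    have h2 : sideVal A B Q
        = 4*R^2 * Real.sin (π*(d:ℝ)/M) * Real.sin (π*(t:ℝ)/M)
            * Real.sin (π*((t:ℝ)-(d:ℝ))/M) := by
      rw [sideVal_pt, e1, e4, e5]
    have P1 : 0 < Real.sin (π*(d:ℝ)/M) := sin_frac_pos _ (by linarith) (by rw [hM]; linarith)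
    have P2 : 0 < Real.sin (π*(1:ℝ)/M) := sin_frac_pos _ (by linarith) (by linarith)
    have P3 : 0 < Real.sin (π*((d:ℝ)-1)/M) :=
      sin_frac_pos _ (by linarith) (by rw [hM]; linarith)
    have P4 : 0 < Real.sin (π*(t:ℝ)/M) := sin_frac_pos _ (by linarith) (by rw [hM]; linarith)
    have P5 : 0 < Real.sin (π*((t:ℝ)-(d:ℝ))/M) :=
      sin_frac_pos _ (by linarith) (by rw [hM]; linarith)
    rw [h1, h2]
    have hq : (0:ℝ) < 4*R^2 := by positivity
    nlinarith [mul_pos (mul_pos (mul_pos hq P1) P2) P3,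
      mul_pos (mul_pos (mul_pos hq P1) P4) P5]
  · have e6 : ((θ + 2*π*((k+t:ℕ):ℝ)/M) - (θ + 2*π*((k+1:ℕ):ℝ)/M))/2
        = π*((t:ℝ)-1)/M := by push_cast; ring
    have e7 : ((θ + 2*π*(k:ℝ)/M) - (θ + 2*π*((k+1:ℕ):ℝ)/M))/2 = -(π*(1:ℝ)/M) := by
      push_cast; ring
    have e8 : ((θ + 2*π*(k:ℝ)/M) - (θ + 2*π*((k+t:ℕ):ℝ)/M))/2 = -(π*(t:ℝ)/M) := by
      push_cast; ring
    have e9 : ((θ + 2*π*((k+d:ℕ):ℝ)/M) - (θ + 2*π*((k+1:ℕ):ℝ)/M))/2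
        = π*((d:ℝ)-1)/M := by push_cast; ring
    have e10 : ((θ + 2*π*((k+d:ℕ):ℝ)/M) - (θ + 2*π*((k+t:ℕ):ℝ)/M))/2
        = -(π*((t:ℝ)-(d:ℝ))/M) := by push_cast; ring
    have h3 : sideVal P Q A
        = 4*R^2 * Real.sin (π*((t:ℝ)-1)/M) * Real.sin (π*(1:ℝ)/M)
            * Real.sin (π*(t:ℝ)/M) := by
      rw [sideVal_pt, e6, e7, e8, Real.sin_neg, Real.sin_neg]; ring
    have h4 : sideVal P Q B
        = -(4*R^2 * Real.sin (π*((t:ℝ)-1)/M) * Real.sin (π*((d:ℝ)-1)/M)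
            * Real.sin (π*((t:ℝ)-(d:ℝ))/M)) := by
      rw [sideVal_pt, e6, e9, e10, Real.sin_neg]; ring
    have P1 : 0 < Real.sin (π*((t:ℝ)-1)/M) :=
      sin_frac_pos _ (by linarith) (by rw [hM]; linarith)
    have P2 : 0 < Real.sin (π*(1:ℝ)/M) := sin_frac_pos _ (by linarith) (by linarith)
    have P3 : 0 < Real.sin (π*(t:ℝ)/M) := sin_frac_pos _ (by linarith) (by rw [hM]; linarith)
    have P4 : 0 < Real.sin (π*((d:ℝ)-1)/M) :=
      sin_frac_pos _ (by linarith) (by rw [hM]; linarith)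
    have P5 : 0 < Real.sin (π*((t:ℝ)-(d:ℝ))/M) :=
      sin_frac_pos _ (by linarith) (by rw [hM]; linarith)
    rw [h3, h4]
    have hq : (0:ℝ) < 4*R^2 := by positivity
    nlinarith [mul_pos (mul_pos (mul_pos hq P1) P2) P3,
      mul_pos (mul_pos (mul_pos hq P1) P4) P5]

end Cross


section Comb
variable {n : ℕ}

lemma exists_adj {V : Type*} {G : SimpleGraph V} (h : G.Preconnected) {x y : V}
    (hxy : x ≠ y) : ∃ z, G.Adj x z := by
  obtain ⟨w⟩ := h x y
  cases w with
  | nil => exact absurd rfl hxy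
  | cons h' _ => exact ⟨_, h'⟩

lemma cir_eq_cir (h : 0 < 2*n-1) {a b : ℕ} :
    cir n h a = cir n h b ↔ a % (2*n-1) = b % (2*n-1) := by
  simp [cir, Fin.ext_iff]

lemma cir_val (h : 0 < 2*n-1) (e : Fin (2*n-1)) : cir n h e.val = some e := by
  simp [cir, Nat.mod_eq_of_lt e.isLt]

lemma cir_add_mul (h : 0 < 2*n-1) (a b : ℕ) : cir n h (a + (2*n-1)*b) = cir n h a := by
  rw [cir_eq_cir h]
  exact Nat.add_mul_mod_self_left a (2*n-1) b

lemma cir_inj (h : 0 < 2*n-1) {k a b : ℕ} (ha : a < 2*n-1) (hb : b < 2*n-1)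
    (he : cir n h (k+a) = cir n h (k+b)) : a = b := by
  rw [cir_eq_cir h] at he
  have h2 : a ≡ b [MOD 2*n-1] := (Nat.ModEq.refl k).add_left_cancel he
  rwa [Nat.ModEq, Nat.mod_eq_of_lt ha, Nat.mod_eq_of_lt hb] at h2

lemma cir_index (h : 0 < 2*n-1) (k : ℕ) (e : Fin (2*n-1)) :
    cir n h (k + ((e.val + (2*n-1) - k % (2*n-1)) % (2*n-1))) = some e := by
  have hmod : (k + ((e.val + (2*n-1) - k % (2*n-1)) % (2*n-1))) % (2*n-1)
      = (k + (e.val + (2*n-1) - k % (2*n-1))) % (2*n-1) := by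
    conv_lhs => rw [Nat.add_mod]
    conv_rhs => rw [Nat.add_mod]
    rw [Nat.mod_mod_of_dvd _ dvd_rfl]
  have hsub : (2*n-1) * (k/(2*n-1)) = k - k % (2*n-1) :=
    Nat.eq_sub_of_add_eq (Nat.div_add_mod k (2*n-1))
  have hle : k % (2*n-1) ≤ k := Nat.mod_le k (2*n-1)
  have hlt : k % (2*n-1) < 2*n-1 := Nat.mod_lt _ h
  have key : k + (e.val + (2*n-1) - k % (2*n-1))
      = e.val + (2*n-1) * (k/(2*n-1) + 1) := by
    have expand : (2*n-1) * (k/(2*n-1) + 1) = (2*n-1) * (k/(2*n-1)) + (2*n-1) := by ring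
    rw [expand, hsub]
    omega
  have : cir n h (k + ((e.val + (2*n-1) - k % (2*n-1)) % (2*n-1)))
      = cir n h (k + (e.val + (2*n-1) - k % (2*n-1))) := by
    rw [cir_eq_cir h]; exact hmod
  rw [this, key, cir_add_mul h, cir_val h]

lemma boundary_cir (h : 0 < 2*n-1) (hm : 1 < 2*n-1) (k : ℕ) :
    (Boundary (cir n h k) (cir n h (k+1)) : Prop) := by
  show ((k % (2*n-1)) + 1) % (2*n-1) = (k+1) % (2*n-1) ∨ _
  left
  conv_rhs => rw [Nat.add_mod]
  rw [Nat.mod_eq_of_lt hm]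

lemma chord_rep_aux (hn : 2 ≤ n) (h : 0 < 2*n-1) (x y : Fin (2*n-1)) (hlt : x.val < y.val) :
    ∃ k d : ℕ, 1 ≤ d ∧ d ≤ n-1 ∧
      ((cir n h k = some x ∧ cir n h (k+d) = some y) ∨
       (cir n h k = some y ∧ cir n h (k+d) = some x)) := by
  have hy := y.isLt
  by_cases hc : y.val - x.val ≤ n-1
  · refine ⟨x.val, y.val - x.val, by omega, hc, Or.inl ⟨cir_val h x, ?_⟩⟩
    have he : x.val + (y.val - x.val) = y.val := by omega
    rw [he, cir_val h]
  · refine ⟨y.val, (2*n-1) - (y.val - x.val), by omega, by omega,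
      Or.inr ⟨cir_val h y, ?_⟩⟩
    have he : y.val + ((2*n-1) - (y.val - x.val)) = x.val + (2*n-1)*1 := by omega
    rw [he, cir_add_mul h, cir_val h]

/-- Core geometric lemma: a plane spanning tree with no boundary edge has no
edge between two circle points. -/
lemma no_nonradial (hn : 2 ≤ n) (c : ℝ × ℝ) (R θ : ℝ) (hR : 0 < R)
    (G : SimpleGraph (WV n)) (hT : G.IsTree) (hNC : NonCrossing (wpos n c R θ) G)
    (hb : ∀ a b : WV n, G.Adj a b → ¬ Boundary a b) (x y : Fin (2*n-1)) :
    ¬ G.Adj (some x) (some y) := by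
  classical
  intro hadj
  have h : 0 < 2*n-1 := by omega
  have bd1 : ∀ k : ℕ, ¬ G.Adj (cir n h k) (cir n h (k+1)) := fun k hk =>
    hb _ _ hk (boundary_cir h (by omega) k)
  have hxy : x.val ≠ y.val := by
    intro he
    exact G.irrefl (by rwa [show x = y from Fin.ext he] at hadj)
  have mk : ∀ (u v : Fin (2*n-1)), G.Adj (some u) (some v) → u.val < v.val →
      ∃ d, (2 ≤ d ∧ ∃ k, G.Adj (cir n h k) (cir n h (k+d))) ∧ d ≤ n-1 := by
    intro u v huv hlt
    obtain ⟨k, d0, hd01, hd0n, hor⟩ := chord_rep_aux hn h u v hlt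
    have hA : G.Adj (cir n h k) (cir n h (k+d0)) := by
      rcases hor with ⟨e1, e2⟩ | ⟨e1, e2⟩
      · rw [e1, e2]; exact huv
      · rw [e1, e2]; exact huv.symm
    rcases Nat.eq_or_lt_of_le hd01 with h1 | h1
    · exact absurd hA (by rw [← h1] at *; exact bd1 k)
    · exact ⟨d0, ⟨h1, k, hA⟩, hd0n⟩
  have hQex : ∃ d, (2 ≤ d ∧ ∃ k, G.Adj (cir n h k) (cir n h (k+d))) ∧ d ≤ n-1 := by
    rcases lt_or_gt_of_ne hxy with hlt | hgt
    · exact mk x y hadj hlt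
    · exact mk y x hadj.symm hgt
  obtain ⟨dw, hdw, hdwle⟩ := hQex
  have hEx : ∃ d, 2 ≤ d ∧ ∃ k, G.Adj (cir n h k) (cir n h (k+d)) := ⟨dw, hdw⟩
  obtain ⟨hd2, k, hA⟩ := Nat.find_spec hEx
  set d := Nat.find hEx with hd
  have hdle : d ≤ n-1 := le_trans (Nat.find_min' hEx hdw) hdwle
  have hpne : (cir n h (k+1) : WV n) ≠ none := by simp [cir]
  obtain ⟨q, hq⟩ := exists_adj hT.isConnected.preconnected hpne
  have posk : ∀ j : ℕ, wpos n c R θ (cir n h j) = pt c R (θ + 2*π*(j:ℝ)/(2*(n:ℝ)-1)) :=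
    wpos_cir_eq n (by omega) h c R θ
  cases q with
  | none =>
    have hne : s(cir n h k, cir n h (k+d)) ≠ s(cir n h (k+1), (none : WV n)) := by
      intro hco
      rw [Sym2.eq_iff] at hco
      rcases hco with ⟨h1, h2⟩ | ⟨h1, h2⟩ <;> simp [cir] at h1 h2
    have hdisj := hNC _ _ _ _ hA hq hne
    rw [posk k, posk (k+d), posk (k+1)] at hdisj
    exact crossA hn hR k d hd2 hdle hdisj
  | some e =>
    set t := (e.val + (2*n-1) - k % (2*n-1)) % (2*n-1) with htdef
    have hct : cir n h (k + t) = some e := cir_index h k e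
    have htm : t < 2*n-1 := Nat.mod_lt _ h
    rw [← hct] at hq
    have ht1 : t ≠ 1 := by
      intro h1
      rw [h1] at hq
      exact G.irrefl hq
    have ht0 : t ≠ 0 := by
      intro h0
      rw [h0, Nat.add_zero] at hq
      apply hb _ _ hq
      show _ ∨ ((k % (2*n-1)) + 1) % (2*n-1) = (k+1) % (2*n-1)
      right
      conv_rhs => rw [Nat.add_mod]
      rw [Nat.mod_eq_of_lt (by omega : 1 < 2*n-1)]
    rcases Nat.lt_or_ge t (d+1) with hts | hts
    · -- t ≤ d : smaller chord, contradiction with minimality / boundary-freeness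
      have ht2 : 2 ≤ t := by omega
      have hkt : k + t = (k+1) + (t-1) := by omega
      rw [hkt] at hq
      rcases Nat.eq_or_lt_of_le ht2 with h2 | h2
      · have h1 : t - 1 = 1 := by omega
        rw [h1] at hq
        exact bd1 (k+1) hq
      · exact Nat.find_min hEx (show t-1 < d by omega) ⟨by omega, k+1, hq⟩
    · -- t > d : crossing chords
      have hne : s(cir n h k, cir n h (k+d)) ≠ s(cir n h (k+1), cir n h (k+t)) := by
        intro hco
        rw [Sym2.eq_iff] at hco
        rcases hco with ⟨h1, h2⟩ | ⟨h1, h2⟩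
        · have h1' : cir n h (k+0) = cir n h (k+1) := by rwa [Nat.add_zero]
          have := cir_inj h (by omega) (by omega) h1'
          omega
        · have := cir_inj h (by omega : d < 2*n-1) (by omega : 1 < 2*n-1) h2
          omega
      have hdisj := hNC _ _ _ _ hA hq hne
      rw [posk k, posk (k+d), posk (k+1), posk (k+t)] at hdisj
      exact crossB hn hR k d t hd2 hdle hts htm hdisj

end Comb


end WheelCfg
open WheelCfg in
/-- In any partition of the complete geometric graph on a regular wheel configuration into
plane spanning trees, every tree has at least one boundary edge. -/
theorem stmt2 (n : ℕ) (hn : 2 ≤ n) (c : ℝ × ℝ) (R θ : ℝ) (hR : 0 < R)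
    (T : Fin n → SimpleGraph (WV n)) (hpart : IsPartition T)
    (hplane : ∀ i, PlaneSpanningTree (wpos n c R θ) (T i)) :
    ∀ i : Fin n, ∃ a b : WV n, (T i).Adj a b ∧ Boundary a b := by
  intro i
  by_contra hcon
  push_neg at hcon
  have h : 0 < 2*n-1 := by omega
  have hrad := no_nonradial hn c R θ hR (T i) (hplane i).1 (hplane i).2 hcon
  have hn0 : 0 < n := by omega
  set j : Fin n := if i.val = 0 then ⟨1, by omega⟩ else ⟨0, hn0⟩ with hj
  have hij : j ≠ i := by
    rw [hj]
    split_ifs with h0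
    · intro he; have := congrArg Fin.val he; simp at this; omega
    · intro he; have := congrArg Fin.val he; simp at this; omega
  obtain ⟨q, hq⟩ := exists_adj (hplane j).1.isConnected.preconnected
      (show (none : WV n) ≠ some ⟨0, h⟩ by simp)
  cases q with
  | none => exact (T j).irrefl hq
  | some e =>
    obtain ⟨z, hz⟩ := exists_adj (hplane i).1.isConnected.preconnected
        (show (some e : WV n) ≠ none by simp)
    cases z with
    | some w => exact hrad e w hz
    | none =>
      obtain ⟨u, _, huniq⟩ := hpart none (some e) (by simp)
      exact hij ((huniq j hq).trans (huniq i hz.symm).symm)
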